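/- Let (S, P) be an acyclic finite DTMC and B ⊆ S. If a function p : S → ℝ satisfies the SMT-encoding constraints for reachability — namely p s = 1 for every s ∈ B, p s = 0 for every s ∉ B from which B is not graph-reachable, and p s = ∑_{s' ∈ S} P s s' · p s' for every s ∉ B from which B is graph-reachable — then p s = Preach s for every s ∈ S. In particular, the SMT encoding of the eventuality probability has a unique solution on acyclic DTMCs, equal to the reachability probability. -/
import Mathlib


open scoped Classical

/-- n-step reachability values of a target set `B` in a DTMC with transition
function `P`. -/
noncomputable def reachN {S : Type*} [Fintype S] (P : S → S → ℝ) (B : Set S) :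
    ℕ → S → ℝ
  | 0, s => if s ∈ B then 1 else 0
  | n + 1, s => if s ∈ B then 1 else ∑ s' : S, P s s' * reachN P B n s'

/-- `B` is graph-reachable from `s`. -/
def GraphReach {S : Type*} (P : S → S → ℝ) (B : Set S) (s : S) : Prop :=
  ∃ t ∈ B, Relation.ReflTransGen (fun a b => 0 < P a b) s t

section helper
variable {S : Type*} [Fintype S] {P : S → S → ℝ} {B : Set S}

lemma reachN_nonneg (hP : ∀ s s' : S, 0 ≤ P s s') : ∀ n s, 0 ≤ reachN P B n s := by
  intro n
  induction n with
  | zero => intro s; rw [reachN]; split <;> norm_num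
  | succ n ih =>
    intro s; rw [reachN]; split
    · norm_num
    · exact Finset.sum_nonneg fun s' _ => mul_nonneg (hP _ _) (ih s')

lemma reachN_le_one (hP : ∀ s s' : S, 0 ≤ P s s') (hsum : ∀ s : S, ∑ s' : S, P s s' = 1) :
    ∀ n s, reachN P B n s ≤ 1 := by
  intro n
  induction n with
  | zero => intro s; rw [reachN]; split <;> norm_num
  | succ n ih =>
    intro s; rw [reachN]; split
    · exact le_refl 1
    · calc ∑ s' : S, P s s' * reachN P B n s' ≤ ∑ s' : S, P s s' * 1 :=
            Finset.sum_le_sum fun s' _ => mul_le_mul_of_nonneg_left (ih s') (hP _ _)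
        _ = 1 := by simp [hsum s]

lemma reachN_mono (hP : ∀ s s' : S, 0 ≤ P s s') :
    ∀ n s, reachN P B n s ≤ reachN P B (n + 1) s := by
  intro n
  induction n with
  | zero =>
    intro s; rw [reachN, reachN]; split
    · norm_num
    · exact Finset.sum_nonneg fun s' _ => mul_nonneg (hP _ _) (reachN_nonneg hP 0 s')
  | succ n ih =>
    intro s
    rw [reachN, show reachN P B (n+2) s = if s ∈ B then 1 else ∑ s' : S, P s s' * reachN P B (n+1) s' from rfl]
    split
    · norm_num
    · exact Finset.sum_le_sum fun s' _ => mul_le_mul_of_nonneg_left (ih s') (hP _ _)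

end helper

section helper2
open Filter Topology
variable {S : Type*} [Fintype S] {P : S → S → ℝ} {B : Set S}

lemma tendsto_reachN (hP : ∀ s s' : S, 0 ≤ P s s') (hsum : ∀ s : S, ∑ s' : S, P s s' = 1)
    (s : S) : Tendsto (fun n => reachN P B n s) atTop (𝓝 (⨆ n : ℕ, reachN P B n s)) :=
  tendsto_atTop_ciSup (monotone_nat_of_le_succ fun n => reachN_mono hP n s)
    ⟨1, by rintro x ⟨n, rfl⟩; exact reachN_le_one hP hsum n s⟩

lemma reachN_of_mem (hB : s ∈ B) : ∀ n, reachN P B n s = 1 := by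
  intro n; cases n <;> rw [reachN] <;> simp [hB]

lemma reachN_of_unreach (hP : ∀ s s' : S, 0 ≤ P s s')
    {s : S} (hB : s ∉ B) (hg : ¬ GraphReach P B s) : ∀ n, reachN P B n s = 0 := by
  have key : ∀ n (t : S), t ∉ B → ¬ GraphReach P B t → reachN P B n t = 0 := by
    intro n
    induction n with
    | zero => intro t htB _; rw [reachN, if_neg htB]
    | succ n ih =>
      intro t htB htg
      rw [reachN, if_neg htB]
      refine Finset.sum_eq_zero fun s' _ => ?_
      rcases eq_or_lt_of_le (hP t s') with h | h
      · rw [← h, zero_mul]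
      · have hs'B : s' ∉ B := fun hs' => htg ⟨s', hs', Relation.ReflTransGen.single h⟩
        have hs'g : ¬ GraphReach P B s' := fun ⟨u, hu, hp⟩ =>
          htg ⟨u, hu, Relation.ReflTransGen.head h hp⟩
        rw [ih s' hs'B hs'g, mul_zero]
  exact fun n => key n s hB hg

lemma sup_reachN_rec (hP : ∀ s s' : S, 0 ≤ P s s') (hsum : ∀ s : S, ∑ s' : S, P s s' = 1)
    {s : S} (hB : s ∉ B) :
    (⨆ n : ℕ, reachN P B n s) = ∑ s' : S, P s s' * ⨆ n : ℕ, reachN P B n s' := by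
  have ht : Tendsto (fun n => reachN P B (n+1) s) atTop (𝓝 (⨆ n : ℕ, reachN P B n s)) :=
    (tendsto_reachN hP hsum s).comp (tendsto_add_atTop_nat 1)
  have ht2 : Tendsto (fun n => ∑ s' : S, P s s' * reachN P B n s') atTop
      (𝓝 (∑ s' : S, P s s' * ⨆ n : ℕ, reachN P B n s')) :=
    tendsto_finset_sum _ fun s' _ => (tendsto_reachN hP hsum s').const_mul _
  have heq : (fun n => reachN P B (n+1) s) = fun n => ∑ s' : S, P s s' * reachN P B n s' := by
    funext n; rw [reachN, if_neg hB]
  rw [heq] at ht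
  exact tendsto_nhds_unique ht ht2

end helper2

theorem smt_reach_unique_on_acyclic' {S : Type*} [Fintype S] [Nonempty S]
    (P : S → S → ℝ)
    (hP : ∀ s s' : S, 0 ≤ P s s')
    (hsum : ∀ s : S, ∑ s' : S, P s s' = 1)
    (habs : ∀ s : S, P s s = 1 ∨ P s s = 0)
    (hwf : WellFounded (fun s' s : S => 0 < P s s' ∧ s' ≠ s))
    (B : Set S) (p : S → ℝ)
    (h1 : ∀ s ∈ B, p s = 1)
    (h0 : ∀ s : S, s ∉ B → ¬ GraphReach P B s → p s = 0)
    (hrec : ∀ s : S, s ∉ B → GraphReach P B s → p s = ∑ s' : S, P s s' * p s') :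
    ∀ s : S, p s = ⨆ n : ℕ, reachN P B n s := by
  intro s
  induction s using hwf.induction with
  | _ s IH =>
  by_cases hB : s ∈ B
  · rw [h1 s hB]
    simp [reachN_of_mem hB]
  by_cases hg : GraphReach P B s
  · -- s is not absorbing
    have hPss : P s s = 0 := by
      rcases habs s with h | h
      · exfalso
        -- all transitions from s go to s
        have honly : ∀ c : S, 0 < P s c → c = s := by
          intro c hc
          by_contra hcs
          have h2 : P s c ≤ ∑ s' ∈ Finset.univ \ {s}, P s s' :=
            Finset.single_le_sum (fun i _ => hP s i)
              (by simp [Finset.mem_sdiff, hcs])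
          have h3 : ∑ s' ∈ Finset.univ \ {s}, P s s' = 0 := by
            have := Finset.sum_sdiff_eq_sub (Finset.subset_univ {s}) (f := fun s' => P s s')
            rw [this, hsum s]
            simp [h]
          linarith
        obtain ⟨t, htB, hpath⟩ := hg
        have hts : ∀ t : S, Relation.ReflTransGen (fun a b => 0 < P a b) s t → t = s := by
          intro t hpath
          induction hpath with
          | refl => rfl
          | tail _ hbc ih => exact honly _ (ih ▸ hbc)
        exact hB (hts t hpath ▸ htB)
      · exact h
    rw [hrec s hB hg, sup_reachN_rec hP hsum hB]
    refine Finset.sum_congr rfl fun s' _ => ?_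
    rcases eq_or_lt_of_le (hP s s') with h | h
    · rw [← h, zero_mul, zero_mul]
    · have hne : s' ≠ s := fun he => by rw [he, hPss] at h; exact lt_irrefl 0 h
      rw [IH s' ⟨h, hne⟩]
  · rw [h0 s hB hg]
    simp [reachN_of_unreach hP hB hg]


/-- Let (S, P) be an acyclic finite DTMC and B ⊆ S. If a function
p : S → ℝ satisfies the SMT-encoding constraints for reachability — p s = 1 on B,
p s = 0 on states outside B from which B is not graph-reachable, and
p s = ∑ s', P s s' * p s' on states outside B from which B is graph-reachable —
then p equals the reachability probability `Preach = ⨆ₙ reach n` everywhere. -/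
theorem smt_reach_unique_on_acyclic {S : Type*} [Fintype S] [Nonempty S]
    (P : S → S → ℝ)
    (hP : ∀ s s' : S, 0 ≤ P s s')
    (hsum : ∀ s : S, ∑ s' : S, P s s' = 1)
    (habs : ∀ s : S, P s s = 1 ∨ P s s = 0)
    (hwf : WellFounded (fun s' s : S => 0 < P s s' ∧ s' ≠ s))
    (B : Set S) (p : S → ℝ)
    (h1 : ∀ s ∈ B, p s = 1)
    (h0 : ∀ s : S, s ∉ B → ¬ GraphReach P B s → p s = 0)
    (hrec : ∀ s : S, s ∉ B → GraphReach P B s → p s = ∑ s' : S, P s s' * p s') :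
    ∀ s : S, p s = ⨆ n : ℕ, reachN P B n s := by
  exact smt_reach_unique_on_acyclic' P hP hsum habs hwf B p h1 h0 hrec
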